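/- Let T: V → g be an O-operator on a bimodule (V; L, R) over a pre-Lie algebra (g, ·). Define 𝔏^T, ℜ^T: V → gl(g) by 𝔏^T_u x = T(u)·x − T(R_x u) and ℜ^T_u x = x·T(u) − T(L_x u). Then (g; 𝔏^T, ℜ^T) is a bimodule over the pre-Lie algebra (V, ·^T), where u·^T v = L_{T(u)}v + R_{T(v)}u. -/
import Mathlib


def PreLieFn {g : Type*} [AddCommGroup g] (m : g → g → g) : Prop :=
  ∀ x y z : g, m (m x y) z - m x (m y z) = m (m y x) z - m y (m x z)

def BimodFn {g V : Type*} [AddCommGroup g] [AddCommGroup V]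
    (m : g → g → g) (L R : g → V → V) : Prop :=
  (∀ (x y : g) (u : V), L x (L y u) - L (m x y) u = L y (L x u) - L (m y x) u) ∧
  (∀ (x y : g) (u : V), L x (R y u) - R y (L x u) = R (m x y) u - R y (R x u))

def NijFn {g : Type*} [AddCommGroup g] (m : g → g → g) (N : g → g) : Prop :=
  ∀ x y : g, m (N x) (N y) = N (m (N x) y + m x (N y) - N (m x y))

def IsOOp {K g V : Type*} [Field K] [AddCommGroup g] [Module K g]
    [AddCommGroup V] [Module K V]
    (m : g →ₗ[K] g →ₗ[K] g) (L R : g →ₗ[K] Module.End K V) (T : V →ₗ[K] g) : Prop :=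
  ∀ u v : V, m (T u) (T v) = T (L (T u) v + R (T v) u)

/-- for an O-operator T, (g; 𝔏^T, ℜ^T) is a bimodule over the
pre-Lie algebra (V, ·^T), where 𝔏^T_u x = T(u)·x − T(R_x u) and
ℜ^T_u x = x·T(u) − T(L_x u). -/
theorem oop_induced_bimodule {K g V : Type*} [Field K]
    [AddCommGroup g] [Module K g] [AddCommGroup V] [Module K V]
    (m : g →ₗ[K] g →ₗ[K] g) (hm : PreLieFn (fun x y => m x y))
    (L R : g →ₗ[K] Module.End K V)
    (hb : BimodFn (fun x y => m x y) (fun x u => L x u) (fun x u => R x u))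
    (T : V →ₗ[K] g) (hT : IsOOp m L R T) :
    BimodFn (fun u v : V => L (T u) v + R (T v) u)
      (fun (u : V) (x : g) => m (T u) x - T (R x u))
      (fun (u : V) (x : g) => m x (T u) - T (L x u)) := by
  
  obtain ⟨hb1, hb2⟩ := hb
  constructor
  · intro u v x
    simp only
    rw [← hT u v, ← hT v u]
    simp only [map_sub, map_add, LinearMap.sub_apply, LinearMap.add_apply]
    rw [hT u (R x v), hT v (R x u)]
    simp only [map_add]
    have h1 : T (L (T u) (R x v)) - T (R x (L (T u) v))
        = T (R (m (T u) x) v) - T (R x (R (T u) v)) := by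
      have := congrArg T (hb2 (T u) x v)
      simpa [map_sub] using this
    have h2 : T (L (T v) (R x u)) - T (R x (L (T v) u))
        = T (R (m (T v) x) u) - T (R x (R (T v) u)) := by
      have := congrArg T (hb2 (T v) x u)
      simpa [map_sub] using this
    have h3 := hm (T u) (T v) x
    linear_combination (norm := module) -h1 + h2 - h3
  · intro u v x
    simp only
    rw [← hT u v]
    simp only [map_sub, map_add, LinearMap.sub_apply, LinearMap.add_apply]
    rw [hT u (L x v), hT (R x u) v, hT (L x u) v]
    simp only [map_add]
    have h1 : T (L (T u) (L x v)) - T (L (m (T u) x) v)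
        = T (L x (L (T u) v)) - T (L (m x (T u)) v) := by
      have := congrArg T (hb1 (T u) x v)
      simpa [map_sub] using this
    have h2 : T (L x (R (T v) u)) - T (R (T v) (L x u))
        = T (R (m x (T v)) u) - T (R (T v) (R x u)) := by
      have := congrArg T (hb2 x (T v) u)
      simpa [map_sub] using this
    have h3 := hm (T u) x (T v)
    linear_combination (norm := module) -h1 + h2 - h3
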